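/- Let L, m be positive integers, let H be a real m×L matrix, let P > 0, and let A be an L×L matrix with integer entries and det A ≠ 0, with columns a₁,…,a_L ∈ ℤ^L. Then L · min_{1 ≤ i ≤ L} ( −(1/2)·log₂( aᵢᵀ(I_L + P·HᵀH)⁻¹aᵢ ) ) ≤ (1/2)·log₂ det(I_L + P·HᵀH). Consequently, if all L users transmit at the common computation rate of a full-rank set of L integer equations, that common rate cannot make the sum rate exceed the MAC sum capacity, i.e., the relay can recover all individual messages. -/

import Mathlib

open Matrix


lemma my_trace_eq_sum_eigenvalues {n : Type*} [Fintype n] [DecidableEq n]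
    {A : Matrix n n ℝ} (hA : A.IsHermitian) :
    A.trace = ∑ i, hA.eigenvalues i := by
  simpa using hA.trace_eq_sum_eigenvalues

lemma my_smul_posSemidef {n : Type*} [Fintype n]
    {S : Matrix n n ℝ} (hS : S.PosSemidef) {c : ℝ} (hc : 0 ≤ c) :
    (c • S).PosSemidef := by
  constructor
  · have := hS.1
    unfold Matrix.IsHermitian at *
    rw [Matrix.conjTranspose_smul, this]
    simp
  · intro x
    exact (hS.smul hc).2 x

/-- det of a PSD real matrix is at most (max diagonal entry)^n, when diag entries bounded by t. -/
lemma my_det_le_pow {n : ℕ} (hn : 0 < n) {N : Matrix (Fin n) (Fin n) ℝ}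
    (hN : N.PosSemidef) {t : ℝ} (ht : 0 ≤ t) (hdiag : ∀ i, N i i ≤ t) :
    N.det ≤ t ^ n := by
  have hHerm := hN.1
  have hev : ∀ i, 0 ≤ hHerm.eigenvalues i := hN.eigenvalues_nonneg
  have hdet : N.det = ∏ i, hHerm.eigenvalues i := by
    have := hHerm.det_eq_prod_eigenvalues
    simpa using this
  have htr : ∑ i, hHerm.eigenvalues i = ∑ i, N i i := by
    rw [← my_trace_eq_sum_eigenvalues hHerm]; rfl
  -- AM-GM with weights 1/n
  have hamgm := Real.geom_mean_le_arith_mean_weighted Finset.univ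
      (fun _ : Fin n => (n : ℝ)⁻¹) hHerm.eigenvalues
      (fun i _ => by positivity)
      (by simp [Finset.card_univ]; field_simp)
      (fun i _ => hev i)
  have hsum : ∑ i, (n : ℝ)⁻¹ * hHerm.eigenvalues i ≤ t := by
    calc ∑ i, (n : ℝ)⁻¹ * hHerm.eigenvalues i
        = (n : ℝ)⁻¹ * ∑ i, N i i := by rw [← Finset.mul_sum, htr]
      _ ≤ (n : ℝ)⁻¹ * (n * t) := by
          apply mul_le_mul_of_nonneg_left _ (by positivity)
          calc ∑ i, N i i ≤ ∑ _i : Fin n, t := Finset.sum_le_sum (fun i _ => hdiag i)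
            _ = n * t := by simp [Finset.card_univ, mul_comm]
      _ = t := by field_simp
  have hg : (∏ i, hHerm.eigenvalues i ^ ((n : ℝ)⁻¹)) ≤ t := le_trans hamgm hsum
  have hgnn : 0 ≤ ∏ i, hHerm.eigenvalues i ^ ((n : ℝ)⁻¹) :=
    Finset.prod_nonneg (fun i _ => Real.rpow_nonneg (hev i) _)
  have := pow_le_pow_left₀ hgnn hg n
  calc N.det = ∏ i, hHerm.eigenvalues i := hdet
    _ = (∏ i, hHerm.eigenvalues i ^ ((n : ℝ)⁻¹)) ^ n := by
        rw [← Finset.prod_pow]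
        apply Finset.prod_congr rfl
        intro i _
        rw [← Real.rpow_natCast (hHerm.eigenvalues i ^ ((n:ℝ)⁻¹)) n,
          ← Real.rpow_mul (hev i), inv_mul_cancel₀ (by positivity : (n:ℝ) ≠ 0),
          Real.rpow_one]
    _ ≤ t ^ n := this





/-- for an integer `L×L` matrix `A` with `det A ≠ 0` and columns
`a₁,…,a_L`, `L` times the minimum of the computation rates
`−(1/2)·log₂(aᵢᵀ(I_L + P·HᵀH)⁻¹aᵢ)` is at most the MAC sum capacity
`(1/2)·log₂ det(I_L + P·HᵀH)`. -/
theorem stmt7 (L m : ℕ) (hL : 0 < L) (hm : 0 < m)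
    (H : Matrix (Fin m) (Fin L) ℝ) (P : ℝ) (hP : 0 < P)
    (A : Matrix (Fin L) (Fin L) ℤ) (hA : A.det ≠ 0) :
    (L : ℝ) *
      (Finset.univ.inf' ⟨⟨0, hL⟩, Finset.mem_univ _⟩
        (fun i : Fin L =>
          -((1/2) * Real.logb 2
            ((fun j => (A j i : ℝ)) ⬝ᵥ
              (((1 : Matrix (Fin L) (Fin L) ℝ) + P • (Hᵀ * H))⁻¹ *ᵥ
                fun j => (A j i : ℝ))))))
      ≤ (1/2) * Real.logb 2 ((1 : Matrix (Fin L) (Fin L) ℝ) + P • (Hᵀ * H)).det := by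
  set M : Matrix (Fin L) (Fin L) ℝ := (1 : Matrix (Fin L) (Fin L) ℝ) + P • (Hᵀ * H) with hMdef
  have hM : M.PosDef := by
    apply Matrix.PosDef.add_posSemidef Matrix.PosDef.one
    have : (Hᵀ * H).PosSemidef := by
      have := Matrix.posSemidef_conjTranspose_mul_self H
      rwa [Matrix.conjTranspose_eq_transpose_of_trivial] at this
    exact my_smul_posSemidef this hP.le
  have hMinv : (M⁻¹).PosDef := hM.inv
  set A' : Matrix (Fin L) (Fin L) ℝ := A.map ((↑) : ℤ → ℝ) with hA'def
  have hdetA' : A'.det = (A.det : ℝ) := (RingHom.map_det (Int.castRingHom ℝ) A).symm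
  set N : Matrix (Fin L) (Fin L) ℝ := A'ᵀ * M⁻¹ * A' with hNdef
  have hNpsd : N.PosSemidef := by
    have := hMinv.posSemidef.conjTranspose_mul_mul_same A'
    rwa [Matrix.conjTranspose_eq_transpose_of_trivial] at this
  set q : Fin L → ℝ := fun i =>
      (fun j => (A j i : ℝ)) ⬝ᵥ (M⁻¹ *ᵥ fun j => (A j i : ℝ)) with hqdef
  have hqN : ∀ i, q i = N i i := by
    intro i
    simp only [hqdef, hNdef, Matrix.mul_apply, Matrix.mulVec, dotProduct,
      Matrix.transpose_apply, Matrix.map_apply, Finset.sum_mul, Finset.mul_sum]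
    rw [Finset.sum_comm]
    apply Finset.sum_congr rfl; intro k _
    apply Finset.sum_congr rfl; intro j _
    simp only [hA'def, Matrix.map_apply]
    ring
  have hcol : ∀ i : Fin L, (fun j => (A j i : ℝ)) ≠ 0 := by
    intro i hzero
    apply hA
    apply Matrix.det_eq_zero_of_column_eq_zero i
    intro j
    have : (A j i : ℝ) = 0 := by simpa using congrFun hzero j
    exact_mod_cast this
  have hqpos : ∀ i, 0 < q i := by
    intro i
    have := hMinv.dotProduct_mulVec_pos (hcol i)
    simpa [hqdef, dotProduct] using this
  -- the maximum diagonal entry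
  obtain ⟨i₀, -, hi₀⟩ := Finset.exists_mem_eq_sup' (⟨⟨0,hL⟩, Finset.mem_univ _⟩ :
      (Finset.univ : Finset (Fin L)).Nonempty) q
  set t : ℝ := Finset.univ.sup' (⟨⟨0,hL⟩, Finset.mem_univ _⟩ :
      (Finset.univ : Finset (Fin L)).Nonempty) q with htdef
  have htpos : 0 < t := hi₀ ▸ hqpos i₀
  have hdiag : ∀ i, N i i ≤ t := fun i => (hqN i) ▸ Finset.le_sup' q (Finset.mem_univ i)
  have hNle : N.det ≤ t ^ L := my_det_le_pow hL hNpsd htpos.le hdiag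
  have hdetN : N.det = (A.det : ℝ)^2 * (M.det)⁻¹ := by
    rw [hNdef, Matrix.det_mul, Matrix.det_mul, Matrix.det_transpose, hdetA',
      Matrix.det_nonsing_inv, Ring.inverse_eq_inv']
    ring
  have hA1 : (1 : ℝ) ≤ (A.det : ℝ)^2 := by
    have h1 : (1 : ℤ) ≤ |A.det| := Int.one_le_abs hA
    have : (1 : ℤ) ≤ A.det ^ 2 := by nlinarith [sq_abs A.det]
    exact_mod_cast this
  have hkey : (1 : ℝ) ≤ M.det * t ^ L := by
    have h1 : (A.det : ℝ)^2 = N.det * M.det := by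
      rw [hdetN, mul_assoc, inv_mul_cancel₀ hM.det_pos.ne', mul_one]
    calc (1:ℝ) ≤ (A.det : ℝ)^2 := hA1
      _ = N.det * M.det := h1
      _ ≤ t ^ L * M.det := by
          apply mul_le_mul_of_nonneg_right hNle hM.det_pos.le
      _ = M.det * t ^ L := mul_comm _ _
  have hlogb : 0 ≤ Real.logb 2 M.det + (L : ℝ) * Real.logb 2 t := by
    have h0 := Real.logb_nonneg (b := 2) one_lt_two hkey
    rwa [Real.logb_mul hM.det_pos.ne' (by positivity), Real.logb_pow] at h0
  -- put it together
  have hinf : Finset.univ.inf' ⟨⟨0, hL⟩, Finset.mem_univ _⟩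
      (fun i : Fin L => -((1/2) * Real.logb 2 (q i))) ≤ -((1/2) * Real.logb 2 t) := by
    rw [hi₀]
    exact Finset.inf'_le _ (Finset.mem_univ i₀)
  calc (L : ℝ) * (Finset.univ.inf' ⟨⟨0, hL⟩, Finset.mem_univ _⟩
        (fun i : Fin L => -((1/2) * Real.logb 2 (q i))))
      ≤ (L : ℝ) * (-((1/2) * Real.logb 2 t)) := by
        apply mul_le_mul_of_nonneg_left hinf (by positivity)
    _ ≤ (1/2) * Real.logb 2 M.det := by linarith
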